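/- Let λ be a nonzero real number and Λ a constant real 2×2 matrix. Let S, K : ℝ × ℝ → M₂(ℝ) be smooth functions of (t,x), 1-periodic in x, with K(t,x) invertible for every (t,x). Set V := K Λ K⁻¹ and M := K⁻¹(S − λA)K + λ·K⁻¹·∂ₓK, and assume −λ·∂ₓV + [V, S − λA] = 0 for all (t,x). Then for every t: (d/dt) ∫₀¹ tr(M(t,x)·Λ) dx = ∫₀¹ tr(∂ₜS(t,x)·V(t,x)) dx. -/

import Mathlib

open Matrix MeasureTheory

/-- The constant matrix `A = (1/2)·[[0,1],[1,0]]`. -/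
noncomputable def A : Matrix (Fin 2) (Fin 2) ℝ := (1/2 : ℝ) • !![0, 1; 1, 0]

/-- Entrywise partial derivative in the second variable `x` of a
matrix-valued function of `(t,x)`. -/
noncomputable def DxM (f : ℝ × ℝ → Matrix (Fin 2) (Fin 2) ℝ) :
    ℝ × ℝ → Matrix (Fin 2) (Fin 2) ℝ :=
  fun z => Matrix.of fun i j => deriv (fun y => f (z.1, y) i j) z.2

/-- Entrywise partial derivative in the first variable `t` of a
matrix-valued function of `(t,x)`. -/
noncomputable def DtM (f : ℝ × ℝ → Matrix (Fin 2) (Fin 2) ℝ) :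
    ℝ × ℝ → Matrix (Fin 2) (Fin 2) ℝ :=
  fun z => Matrix.of fun i j => deriv (fun s => f (s, z.2) i j) z.1

/-- A matrix-valued function of `(t,x)` is smooth if all its entries are `C^∞`. -/
def MSmooth2 (f : ℝ × ℝ → Matrix (Fin 2) (Fin 2) ℝ) : Prop :=
  ∀ i j, ContDiff ℝ (⊤ : ℕ∞) fun z : ℝ × ℝ => f z i j

/-- 1-periodicity in the second variable `x`. -/
def MPeriodicX (f : ℝ × ℝ → Matrix (Fin 2) (Fin 2) ℝ) : Prop :=
  ∀ t x : ℝ, f (t, x + 1) = f (t, x)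

/-! ### One-variable entrywise matrix calculus -/

local notation "Mat" => Matrix (Fin 2) (Fin 2) ℝ

/-- one-variable entrywise matrix derivative -/
noncomputable def md (g : ℝ → Mat) (t : ℝ) : Mat :=
  Matrix.of fun i j => deriv (fun s => g s i j) t

def MDiffAt (g : ℝ → Mat) (t : ℝ) : Prop :=
  ∀ i j, DifferentiableAt ℝ (fun s => g s i j) t

lemma DtM_eq_md (f : ℝ × ℝ → Mat) (t x : ℝ) : DtM f (t, x) = md (fun s => f (s, x)) t := rfl

lemma DxM_eq_md (f : ℝ × ℝ → Mat) (t x : ℝ) : DxM f (t, x) = md (fun y => f (t, y)) x := rfl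

lemma MDiffAt.mul {g h : ℝ → Mat} {t : ℝ} (hg : MDiffAt g t) (hh : MDiffAt h t) :
    MDiffAt (fun s => g s * h s) t := by
  intro i j
  have : (fun s => (g s * h s) i j) = fun s => ∑ k, g s i k * h s k j := by
    funext s; simp [Matrix.mul_apply]
  rw [this]
  exact DifferentiableAt.fun_sum fun k _ => (hg i k).mul (hh k j)

lemma MDiffAt.subC {g : ℝ → Mat} {t : ℝ} (hg : MDiffAt g t) (C : Mat) :
    MDiffAt (fun s => g s - C) t := by
  intro i j
  have : (fun s => (g s - C) i j) = fun s => g s i j - C i j := by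
    funext s; simp [Matrix.sub_apply]
  rw [this]
  exact (hg i j).sub_const _

lemma md_mul {g h : ℝ → Mat} {t : ℝ} (hg : MDiffAt g t) (hh : MDiffAt h t) :
    md (fun s => g s * h s) t = md g t * h t + g t * md h t := by
  ext i j
  simp only [md, Matrix.of_apply, Matrix.add_apply, Matrix.mul_apply]
  rw [deriv_fun_sum (A := fun k s => g s i k * h s k j) (fun k _ => ((hg i k).mul (hh k j)))]
  rw [← Finset.sum_add_distrib]
  congr 1; funext k
  rw [deriv_fun_mul (hg i k) (hh k j)]

lemma md_add {g h : ℝ → Mat} {t : ℝ} (hg : MDiffAt g t) (hh : MDiffAt h t) :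
    md (fun s => g s + h s) t = md g t + md h t := by
  ext i j
  simp only [md, Matrix.of_apply, Matrix.add_apply]
  exact deriv_add (hg i j) (hh i j)

lemma md_smul (c : ℝ) {g : ℝ → Mat} {t : ℝ} :
    md (fun s => c • g s) t = c • md g t := by
  ext i j
  simp only [md, Matrix.of_apply, Matrix.smul_apply, smul_eq_mul]
  rw [← deriv_const_mul_field]

lemma md_subC {g : ℝ → Mat} {t : ℝ} (C : Mat) :
    md (fun s => g s - C) t = md g t := by
  ext i j
  simp only [md, Matrix.of_apply, Matrix.sub_apply]
  rw [deriv_sub_const]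

lemma md_inv {g n : ℝ → Mat} {t : ℝ} (hg : MDiffAt g t) (hn : MDiffAt n t)
    (h1 : ∀ s, g s * n s = 1) (h1' : n t * g t = 1) :
    md n t = -(n t * md g t * n t) := by
  have h0 : md (fun s => g s * n s) t = 0 := by
    have : (fun s => g s * n s) = fun _ => (1 : Mat) := funext h1
    rw [this]
    ext i j; simp [md]
  rw [md_mul hg hn] at h0
  have h2 : g t * md n t = -(md g t * n t) := by
    apply eq_neg_of_add_eq_zero_left
    rw [add_comm]; exact h0
  calc md n t = (n t * g t) * md n t := by rw [h1', one_mul]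
    _ = n t * (g t * md n t) := by rw [mul_assoc]
    _ = n t * -(md g t * n t) := by rw [h2]
    _ = -(n t * md g t * n t) := by rw [mul_neg, mul_assoc]

lemma hasDerivAt_trace {g : ℝ → Mat} {t : ℝ} (hg : MDiffAt g t) :
    HasDerivAt (fun s => (g s).trace) ((md g t).trace) t := by
  have e : (fun s => (g s).trace) = fun s => ∑ i, g s i i := by
    funext s; simp [Matrix.trace, Matrix.diag]
  have e2 : (md g t).trace = ∑ i, deriv (fun s => g s i i) t := by
    simp [Matrix.trace, Matrix.diag, md]
  rw [e, e2]
  exact HasDerivAt.fun_sum fun i _ => (hg i i).hasDerivAt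

lemma hasDerivAt_traceMul {g : ℝ → Mat} (C : Mat) {t : ℝ} (hg : MDiffAt g t) :
    HasDerivAt (fun s => (g s * C).trace) ((md g t * C).trace) t := by
  have e : (fun s => (g s * C).trace) = fun s => ∑ i, ∑ j, g s i j * C j i := by
    funext s; simp [Matrix.trace, Matrix.diag, Matrix.mul_apply]
  have h2 : (md g t * C).trace = ∑ i, ∑ j, (deriv (fun s => g s i j) t) * C j i := by
    simp [Matrix.trace, Matrix.diag, Matrix.mul_apply, md]
  rw [e, h2]
  apply HasDerivAt.fun_sum
  intro i _
  apply HasDerivAt.fun_sum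
  intro j _
  exact ((hg i j).hasDerivAt).mul_const _

/-! ### Partial derivatives via `fderiv`, smoothness, Schwarz -/

lemma hasDerivAt_path2 (a x : ℝ) : HasDerivAt (fun y : ℝ => ((a, y) : ℝ × ℝ)) (0, 1) x :=
  (hasDerivAt_const x a).prodMk (hasDerivAt_id x)

lemma hasDerivAt_path1 (b t : ℝ) : HasDerivAt (fun s : ℝ => ((s, b) : ℝ × ℝ)) (1, 0) t :=
  (hasDerivAt_id t).prodMk (hasDerivAt_const t b)

lemma partial2_hasDerivAt {φ : ℝ × ℝ → ℝ} {z : ℝ × ℝ} (hφ : DifferentiableAt ℝ φ z) :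
    HasDerivAt (fun y => φ (z.1, y)) (fderiv ℝ φ z (0, 1)) z.2 := by
  have h := hφ.hasFDerivAt.comp_hasDerivAt z.2 (hasDerivAt_path2 z.1 z.2)
  exact h

lemma partial1_hasDerivAt {φ : ℝ × ℝ → ℝ} {z : ℝ × ℝ} (hφ : DifferentiableAt ℝ φ z) :
    HasDerivAt (fun s => φ (s, z.2)) (fderiv ℝ φ z (1, 0)) z.1 := by
  have h := hφ.hasFDerivAt.comp_hasDerivAt z.1 (hasDerivAt_path1 z.2 z.1)
  exact h

lemma partial2_eq {φ : ℝ × ℝ → ℝ} {z : ℝ × ℝ} (hφ : DifferentiableAt ℝ φ z) :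
    deriv (fun y => φ (z.1, y)) z.2 = fderiv ℝ φ z (0, 1) :=
  (partial2_hasDerivAt hφ).deriv

lemma partial1_eq {φ : ℝ × ℝ → ℝ} {z : ℝ × ℝ} (hφ : DifferentiableAt ℝ φ z) :
    deriv (fun s => φ (s, z.2)) z.1 = fderiv ℝ φ z (1, 0) :=
  (partial1_hasDerivAt hφ).deriv

lemma contDiff_fderiv_apply {φ : ℝ × ℝ → ℝ} (hφ : ContDiff ℝ (⊤ : ℕ∞) φ) (v : ℝ × ℝ) :
    ContDiff ℝ (⊤ : ℕ∞) (fun z => fderiv ℝ φ z v) :=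
  (hφ.fderiv_right (m := (⊤ : ℕ∞)) (by simp)).clm_apply contDiff_const

lemma contDiff_partial2 {φ : ℝ × ℝ → ℝ} (hφ : ContDiff ℝ (⊤ : ℕ∞) φ) :
    ContDiff ℝ (⊤ : ℕ∞) (fun z : ℝ × ℝ => deriv (fun y => φ (z.1, y)) z.2) := by
  have : (fun z : ℝ × ℝ => deriv (fun y => φ (z.1, y)) z.2)
      = fun z => fderiv ℝ φ z (0, 1) := by
    funext z; exact partial2_eq (hφ.differentiable (by simp) z)
  rw [this]; exact contDiff_fderiv_apply hφ _

lemma contDiff_partial1 {φ : ℝ × ℝ → ℝ} (hφ : ContDiff ℝ (⊤ : ℕ∞) φ) :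
    ContDiff ℝ (⊤ : ℕ∞) (fun z : ℝ × ℝ => deriv (fun s => φ (s, z.2)) z.1) := by
  have : (fun z : ℝ × ℝ => deriv (fun s => φ (s, z.2)) z.1)
      = fun z => fderiv ℝ φ z (1, 0) := by
    funext z; exact partial1_eq (hφ.differentiable (by simp) z)
  rw [this]; exact contDiff_fderiv_apply hφ _

lemma fderiv_fderiv_apply {φ : ℝ × ℝ → ℝ} (hφ : ContDiff ℝ (⊤ : ℕ∞) φ) (z u v : ℝ × ℝ) :
    fderiv ℝ (fun w => fderiv ℝ φ w v) z u = fderiv ℝ (fderiv ℝ φ) z u v := by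
  have hd : DifferentiableAt ℝ (fderiv ℝ φ) z :=
    ((hφ.fderiv_right (m := (⊤ : ℕ∞)) (by simp)).differentiable (by simp)) z
  have h : HasFDerivAt (fun w => fderiv ℝ φ w v)
      ((ContinuousLinearMap.apply ℝ ℝ v).comp (fderiv ℝ (fderiv ℝ φ) z)) z :=
    (ContinuousLinearMap.apply ℝ ℝ v).hasFDerivAt.comp z hd.hasFDerivAt
  rw [h.fderiv]; rfl

/-- Schwarz: mixed partials commute for smooth functions on ℝ². -/
lemma schwarz {φ : ℝ × ℝ → ℝ} (hφ : ContDiff ℝ (⊤ : ℕ∞) φ) (z : ℝ × ℝ) :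
    deriv (fun s => deriv (fun y => φ (s, y)) z.2) z.1
      = deriv (fun y => deriv (fun s => φ (s, y)) z.1) z.2 := by
  have hφd : Differentiable ℝ φ := hφ.differentiable (by simp)
  have hd2 : ContDiff ℝ (⊤ : ℕ∞) (fun w => fderiv ℝ φ w (0,1)) := contDiff_fderiv_apply hφ _
  have hd1 : ContDiff ℝ (⊤ : ℕ∞) (fun w => fderiv ℝ φ w (1,0)) := contDiff_fderiv_apply hφ _
  have e2 : (fun s => deriv (fun y => φ (s, y)) z.2) = fun s => fderiv ℝ φ (s, z.2) (0,1) := by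
    funext s; exact partial2_eq (φ := φ) (z := (s, z.2)) (hφd _)
  have e1 : (fun y => deriv (fun s => φ (s, y)) z.1) = fun y => fderiv ℝ φ (z.1, y) (1,0) := by
    funext y; exact partial1_eq (φ := φ) (z := (z.1, y)) (hφd _)
  rw [e2, e1]
  rw [partial1_eq (φ := fun w => fderiv ℝ φ w (0,1)) (z := z) ((hd2.differentiable (by simp)) z)]
  rw [partial2_eq (φ := fun w => fderiv ℝ φ w (1,0)) (z := z) ((hd1.differentiable (by simp)) z)]
  rw [fderiv_fderiv_apply hφ z (1,0) (0,1), fderiv_fderiv_apply hφ z (0,1) (1,0)]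
  have hsnd : HasFDerivAt (fderiv ℝ φ) (fderiv ℝ (fderiv ℝ φ) z) z :=
    (((hφ.fderiv_right (m := (⊤ : ℕ∞)) (by simp)).differentiable (by simp)) z).hasFDerivAt
  exact second_derivative_symmetric (fun y => (hφd y).hasFDerivAt) hsnd (1,0) (0,1)

/-! ### Smoothness closure properties -/

section smooth
variable {f g : ℝ × ℝ → Matrix (Fin 2) (Fin 2) ℝ}

lemma MSmooth2.mulM (hf : MSmooth2 f) (hg : MSmooth2 g) :
    MSmooth2 (fun z => f z * g z) := by
  intro i j
  have : (fun z : ℝ × ℝ => (f z * g z) i j) = fun z => ∑ k, f z i k * g z k j := by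
    funext z; simp [Matrix.mul_apply]
  rw [this]
  exact ContDiff.sum fun k _ => (hf i k).mul (hg k j)

lemma MSmooth2.addM (hf : MSmooth2 f) (hg : MSmooth2 g) :
    MSmooth2 (fun z => f z + g z) := fun i j => by
  simpa using (hf i j).add (hg i j)

lemma MSmooth2.subM (hf : MSmooth2 f) (hg : MSmooth2 g) :
    MSmooth2 (fun z => f z - g z) := fun i j => by
  simpa using (hf i j).sub (hg i j)

lemma MSmooth2.smulM (c : ℝ) (hf : MSmooth2 f) :
    MSmooth2 (fun z => c • f z) := fun i j => by
  simpa [Matrix.smul_apply, smul_eq_mul] using (hf i j).const_smul c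

lemma msmooth_const (C : Matrix (Fin 2) (Fin 2) ℝ) : MSmooth2 (fun _ => C) :=
  fun _ _ => contDiff_const

lemma MSmooth2.dxM (hf : MSmooth2 f) : MSmooth2 (DxM f) := by
  intro i j
  exact contDiff_partial2 (hf i j)

lemma MSmooth2.dtM (hf : MSmooth2 f) : MSmooth2 (DtM f) := by
  intro i j
  exact contDiff_partial1 (hf i j)

lemma MSmooth2.invM (hf : MSmooth2 f) (hu : ∀ z, IsUnit (f z)) :
    MSmooth2 (fun z => (f z)⁻¹) := by
  have hdet : ∀ z, (f z).det ≠ 0 := fun z =>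
    ((Matrix.isUnit_iff_isUnit_det (f z)).mp (hu z)).ne_zero
  have hdetC : ContDiff ℝ (⊤ : ℕ∞) (fun z => (f z).det) := by
    have : (fun z => (f z).det) = fun z => f z 0 0 * f z 1 1 - f z 0 1 * f z 1 0 := by
      funext z; exact Matrix.det_fin_two (f z)
    rw [this]
    exact ((hf 0 0).mul (hf 1 1)).sub ((hf 0 1).mul (hf 1 0))
  have hdetinv : ContDiff ℝ (⊤ : ℕ∞) (fun z => ((f z).det)⁻¹) := hdetC.inv hdet
  intro i j
  have hrw : (fun z => (f z)⁻¹ i j) = fun z => ((f z).det)⁻¹ * (f z).adjugate i j := by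
    funext z
    rw [Matrix.inv_def, Ring.inverse_eq_inv']
    simp [Matrix.smul_apply, smul_eq_mul]
  rw [hrw]
  apply hdetinv.mul
  have hadj : ∀ z, (f z).adjugate = !![f z 1 1, -(f z 0 1); -(f z 1 0), f z 0 0] :=
    fun z => Matrix.adjugate_fin_two (f z)
  fin_cases i <;> fin_cases j <;> simp only [hadj] <;>
    simp [Matrix.cons_val_zero, Matrix.cons_val_one] <;>
    first
      | exact hf 1 1
      | exact (hf 0 1).neg
      | exact (hf 1 0).neg
      | exact hf 0 0

lemma MSmooth2.traceC (hf : MSmooth2 f) : ContDiff ℝ (⊤ : ℕ∞) (fun z => (f z).trace) := by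
  have : (fun z => (f z).trace) = fun z => f z 0 0 + f z 1 1 := by
    funext z; rw [Matrix.trace_fin_two]
  rw [this]; exact (hf 0 0).add (hf 1 1)

lemma MSmooth2.mdiffAt (hf : MSmooth2 f) (x t : ℝ) : MDiffAt (fun s => f (s, x)) t := by
  intro i j
  have : (fun s : ℝ => f (s, x) i j) = (fun z : ℝ × ℝ => f z i j) ∘ (fun s : ℝ => (s, x)) := rfl
  rw [this]
  exact DifferentiableAt.comp t ((hf i j).differentiable (by simp) _)
    ((differentiable_id.prodMk (differentiable_const x)) t)

lemma MSmooth2.mdiffAtX (hf : MSmooth2 f) (t x : ℝ) : MDiffAt (fun y => f (t, y)) x := by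
  intro i j
  have : (fun y : ℝ => f (t, y) i j) = (fun z : ℝ × ℝ => f z i j) ∘ (fun y : ℝ => (t, y)) := rfl
  rw [this]
  exact DifferentiableAt.comp x ((hf i j).differentiable (by simp) _)
    (((differentiable_const t).prodMk differentiable_id) x)

end smooth

/-! ### The key trace-algebra identity -/

lemma key_algebra (lam : ℝ) (Kz N Kt Kx Ktx St Bz Λ : Mat)
    (hNK : N * Kz = 1)
    (hLax : lam • (Kx * Λ * N - Kz * Λ * (N * Kx * N)) = Kz * Λ * N * Bz - Bz * (Kz * Λ * N)) :
    ((-(N * Kt * N) * Bz * Kz + N * St * Kz + N * Bz * Kt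
        + lam • (-(N * Kt * N) * Kx + N * Ktx)) * Λ).trace
      = (St * (Kz * Λ * N)).trace
        + lam * ((Ktx * Λ * N).trace + (Kt * Λ * -(N * Kx * N)).trace) := by
  have hKNK : Kt * N * Kz = Kt := by rw [mul_assoc, hNK, mul_one]
  have h0 := congrArg (fun X : Mat => (Kt * N * X).trace) hLax
  simp only [mul_sub, mul_smul_comm, smul_sub, Matrix.trace_sub, Matrix.trace_smul,
    smul_eq_mul, ← mul_assoc, hKNK] at h0
  have c1 : (N * St * Kz * Λ).trace = (St * Kz * Λ * N).trace := by
    rw [Matrix.trace_mul_cycle]; (try simp only [← mul_assoc])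
    rw [Matrix.trace_mul_cycle]; (try simp only [← mul_assoc])
    rw [Matrix.trace_mul_cycle]; (try simp only [← mul_assoc])
  have c2 : (N * Bz * Kt * Λ).trace = (Kt * Λ * N * Bz).trace := by
    rw [Matrix.trace_mul_cycle]; (try simp only [← mul_assoc])
    rw [Matrix.trace_mul_cycle]; (try simp only [← mul_assoc])
  have c3 : (N * Kt * N * Bz * Kz * Λ).trace = (Kt * N * Bz * Kz * Λ * N).trace := by
    rw [Matrix.trace_mul_cycle]; (try simp only [← mul_assoc])
    rw [Matrix.trace_mul_cycle]; (try simp only [← mul_assoc])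
    rw [Matrix.trace_mul_cycle]; (try simp only [← mul_assoc])
    rw [Matrix.trace_mul_cycle]; (try simp only [← mul_assoc])
    rw [Matrix.trace_mul_cycle]; (try simp only [← mul_assoc])
  have c4 : (N * Kt * N * Kx * Λ).trace = (Kt * N * Kx * Λ * N).trace := by
    rw [Matrix.trace_mul_cycle]; (try simp only [← mul_assoc])
    rw [Matrix.trace_mul_cycle]; (try simp only [← mul_assoc])
    rw [Matrix.trace_mul_cycle]; (try simp only [← mul_assoc])
    rw [Matrix.trace_mul_cycle]; (try simp only [← mul_assoc])
  have c5 : (N * Ktx * Λ).trace = (Ktx * Λ * N).trace := by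
    rw [Matrix.trace_mul_cycle]; (try simp only [← mul_assoc])
    rw [Matrix.trace_mul_cycle]; (try simp only [← mul_assoc])
  simp only [add_mul, neg_mul, smul_mul_assoc, Matrix.trace_add, Matrix.trace_neg,
    Matrix.trace_smul, smul_eq_mul, mul_neg, ← mul_assoc]
  linear_combination c1 + c2 - c3 - lam * c4 + lam * c5 - h0

/-! ### auxiliary small lemmas -/

lemma mdiffAt_const (C : Mat) (t : ℝ) : MDiffAt (fun _ => C) t := fun i j => by
  simpa using differentiableAt_const (C i j)

lemma MDiffAt.smulC {g : ℝ → Mat} {t : ℝ} (c : ℝ) (hg : MDiffAt g t) :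
    MDiffAt (fun s => c • g s) t := by
  intro i j
  have : (fun s => (c • g s) i j) = fun s => c * g s i j := by
    funext s; simp [Matrix.smul_apply]
  rw [this]
  exact (hg i j).const_mul c

lemma md_constR (C : Mat) (t : ℝ) : md (fun _ => C) t = 0 := by
  ext i j; simp [md]

lemma MSmooth2.negM {f : ℝ × ℝ → Mat} (hf : MSmooth2 f) :
    MSmooth2 (fun z => -(f z)) := fun i j => by
  simpa using (hf i j).neg

theorem V_is_exact_oneForm (lam : ℝ) (hlam : lam ≠ 0)
    (Λ : Matrix (Fin 2) (Fin 2) ℝ)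
    (S K : ℝ × ℝ → Matrix (Fin 2) (Fin 2) ℝ)
    (hS : MSmooth2 S) (hK : MSmooth2 K)
    (hSper : MPeriodicX S) (hKper : MPeriodicX K)
    (hKinv : ∀ z : ℝ × ℝ, IsUnit (K z))
    (V M : ℝ × ℝ → Matrix (Fin 2) (Fin 2) ℝ)
    (hV : V = fun z => K z * Λ * (K z)⁻¹)
    (hM : M = fun z => (K z)⁻¹ * (S z - lam • A) * K z + lam • ((K z)⁻¹ * DxM K z))
    (hLax : ∀ z : ℝ × ℝ,
      (-lam) • DxM V z + (V z * (S z - lam • A) - (S z - lam • A) * V z) = 0) :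
    ∀ t : ℝ,
      deriv (fun s => ∫ x in (0:ℝ)..1, (M (s, x) * Λ).trace) t =
        ∫ x in (0:ℝ)..1, (DtM S (t, x) * V (t, x)).trace := by
  intro t
  have hNsm : MSmooth2 (fun z => (K z)⁻¹) := hK.invM hKinv
  have hNK : ∀ z, (K z)⁻¹ * K z = 1 := fun z =>
    Matrix.nonsing_inv_mul (K z) ((Matrix.isUnit_iff_isUnit_det (K z)).mp (hKinv z))
  have hKN : ∀ z, K z * (K z)⁻¹ = 1 := fun z =>
    Matrix.mul_nonsing_inv (K z) ((Matrix.isUnit_iff_isUnit_det (K z)).mp (hKinv z))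
  have hKxsm : MSmooth2 (DxM K) := hK.dxM
  have hKtsm : MSmooth2 (DtM K) := hK.dtM
  have hStsm : MSmooth2 (DtM S) := hS.dtM
  have hBsm : MSmooth2 (fun z => S z - lam • A) := hS.subM (msmooth_const _)
  have hVsm : MSmooth2 V := by rw [hV]; exact (hK.mulM (msmooth_const Λ)).mulM hNsm
  have hMsm : MSmooth2 M := by
    rw [hM]
    exact ((hNsm.mulM hBsm).mulM hK).addM (MSmooth2.smulM lam (hNsm.mulM hKxsm))
  -- the x-derivative of V
  have hDxV : ∀ z : ℝ × ℝ, DxM V z =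
      DxM K z * Λ * (K z)⁻¹ - K z * Λ * ((K z)⁻¹ * DxM K z * (K z)⁻¹) := by
    rintro ⟨t', x⟩
    have hKd : MDiffAt (fun y => K (t', y)) x := hK.mdiffAtX t' x
    have hNd : MDiffAt (fun y => (K (t', y))⁻¹) x := hNsm.mdiffAtX t' x
    have hKL : MDiffAt (fun y => K (t', y) * Λ) x := hKd.mul (mdiffAt_const Λ x)
    have hNinv : md (fun y => (K (t', y))⁻¹) x
        = -((K (t', x))⁻¹ * md (fun y => K (t', y)) x * (K (t', x))⁻¹) :=
      md_inv hKd hNd (fun y => hKN (t', y)) (hNK (t', x))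
    rw [hV, DxM_eq_md]
    show md (fun y => K (t', y) * Λ * (K (t', y))⁻¹) x = _
    rw [md_mul hKL hNd, md_mul hKd (mdiffAt_const Λ x), md_constR, hNinv]
    rw [← DxM_eq_md]
    rw [mul_zero, add_zero, mul_neg, sub_eq_add_neg]
  -- Lax equation in the form needed
  have hLax' : ∀ z : ℝ × ℝ,
      lam • (DxM K z * Λ * (K z)⁻¹ - K z * Λ * ((K z)⁻¹ * DxM K z * (K z)⁻¹))
        = K z * Λ * (K z)⁻¹ * (S z - lam • A) - (S z - lam • A) * (K z * Λ * (K z)⁻¹) := by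
    intro z
    have h := hLax z
    have h2 : lam • DxM V z = V z * (S z - lam • A) - (S z - lam • A) * V z := by
      have := congrArg (fun X => X + lam • DxM V z) h
      simp only [zero_add] at this
      rw [← this]
      module
    rw [← hDxV z, h2, hV]
  -- formula for the t-derivative of M
  have hDtM_M : ∀ z : ℝ × ℝ, DtM M z =
      -((K z)⁻¹ * DtM K z * (K z)⁻¹) * (S z - lam • A) * K z
      + (K z)⁻¹ * DtM S z * K z
      + (K z)⁻¹ * (S z - lam • A) * DtM K z
      + lam • (-((K z)⁻¹ * DtM K z * (K z)⁻¹) * DxM K z + (K z)⁻¹ * DtM (DxM K) z) := by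
    rintro ⟨t', x⟩
    have hKd : MDiffAt (fun s => K (s, x)) t' := hK.mdiffAt x t'
    have hNd : MDiffAt (fun s => (K (s, x))⁻¹) t' := hNsm.mdiffAt x t'
    have hSd : MDiffAt (fun s => S (s, x)) t' := hS.mdiffAt x t'
    have hKxd : MDiffAt (fun s => DxM K (s, x)) t' := hKxsm.mdiffAt x t'
    have hBd : MDiffAt (fun s => S (s, x) - lam • A) t' := hSd.subC _
    have hNBd : MDiffAt (fun s => (K (s, x))⁻¹ * (S (s, x) - lam • A)) t' := hNd.mul hBd
    have hNinv : md (fun s => (K (s, x))⁻¹) t'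
        = -((K (t', x))⁻¹ * md (fun s => K (s, x)) t' * (K (t', x))⁻¹) :=
      md_inv hKd hNd (fun s => hKN (s, x)) (hNK (t', x))
    rw [hM, DtM_eq_md]
    show md (fun s => (K (s, x))⁻¹ * (S (s, x) - lam • A) * K (s, x)
        + lam • ((K (s, x))⁻¹ * DxM K (s, x))) t' = _
    rw [md_add (hNBd.mul hKd) (MDiffAt.smulC lam (hNd.mul hKxd)),
      md_mul hNBd hKd, md_mul hNd hBd, md_smul, md_mul hNd hKxd,
      hNinv, md_subC]
    rw [← DtM_eq_md, ← DtM_eq_md, ← DtM_eq_md]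
    rw [add_mul]
  -- Claim A: pointwise derivative of integrand in t
  have claimA : ∀ z : ℝ × ℝ, HasDerivAt (fun s => (M (s, z.2) * Λ).trace)
      ((DtM S z * V z).trace
        + lam * ((DtM (DxM K) z * Λ * (K z)⁻¹).trace
          + (DtM K z * Λ * -((K z)⁻¹ * DxM K z * (K z)⁻¹)).trace)) z.1 := by
    intro z
    have h := hasDerivAt_traceMul Λ (hMsm.mdiffAt z.2 z.1)
    have hz : ((t, z.2) : ℝ × ℝ).1 = t := rfl
    have e : (md (fun s => M (s, z.2)) z.1 * Λ).trace
        = (DtM S z * V z).trace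
          + lam * ((DtM (DxM K) z * Λ * (K z)⁻¹).trace
            + (DtM K z * Λ * -((K z)⁻¹ * DxM K z * (K z)⁻¹)).trace) := by
      have hmd : md (fun s => M (s, z.2)) z.1 = DtM M z := by
        rw [DtM_eq_md M z.1 z.2]
      rw [hmd, hDtM_M z]
      have := key_algebra lam (K z) ((K z)⁻¹) (DtM K z) (DxM K z) (DtM (DxM K) z)
        (DtM S z) (S z - lam • A) Λ (hNK z) (hLax' z)
      rw [this, hV]
    rw [← e]
    exact h
  -- the periodic scalar whose x-derivative appears
  set ψ : ℝ → ℝ := fun y => lam * ((DtM K (t, y) * Λ * (K (t, y))⁻¹).trace) with hψdef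
  have hψsm : ContDiff ℝ (⊤ : ℕ∞) ψ := by
    have h2 : ContDiff ℝ (⊤ : ℕ∞)
        (fun z : ℝ × ℝ => lam * ((DtM K z * Λ * (K z)⁻¹).trace)) :=
      (((hKtsm.mulM (msmooth_const Λ)).mulM hNsm).traceC).const_smul lam
    have : ψ = (fun z : ℝ × ℝ => lam * ((DtM K z * Λ * (K z)⁻¹).trace))
        ∘ (fun y : ℝ => (t, y)) := rfl
    rw [this]
    exact h2.comp (contDiff_const.prodMk contDiff_id)
  -- claim B: deriv of ψ is the extra term
  have claimB : ∀ x : ℝ, deriv ψ x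
      = lam * ((DtM (DxM K) (t, x) * Λ * (K (t, x))⁻¹).trace
        + (DtM K (t, x) * Λ * -((K (t, x))⁻¹ * DxM K (t, x) * (K (t, x))⁻¹)).trace) := by
    intro x
    have hKtd : MDiffAt (fun y => DtM K (t, y)) x := hKtsm.mdiffAtX t x
    have hNd : MDiffAt (fun y => (K (t, y))⁻¹) x := hNsm.mdiffAtX t x
    have hKd : MDiffAt (fun y => K (t, y)) x := hK.mdiffAtX t x
    have hKtL : MDiffAt (fun y => DtM K (t, y) * Λ) x := hKtd.mul (mdiffAt_const Λ x)
    have hNinv : md (fun y => (K (t, y))⁻¹) x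
        = -((K (t, x))⁻¹ * md (fun y => K (t, y)) x * (K (t, x))⁻¹) :=
      md_inv hKd hNd (fun y => hKN (t, y)) (hNK (t, x))
    have hW : HasDerivAt (fun y => (DtM K (t, y) * Λ * (K (t, y))⁻¹).trace)
        ((md (fun y => DtM K (t, y) * Λ * (K (t, y))⁻¹) x).trace) x :=
      hasDerivAt_trace (hKtL.mul hNd)
    have hmd : md (fun y => DtM K (t, y) * Λ * (K (t, y))⁻¹) x
        = DtM (DxM K) (t, x) * Λ * (K (t, x))⁻¹
          + DtM K (t, x) * Λ * -((K (t, x))⁻¹ * DxM K (t, x) * (K (t, x))⁻¹) := by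
      rw [md_mul hKtL hNd, md_mul hKtd (mdiffAt_const Λ x), md_constR, hNinv]
      rw [mul_zero, add_zero, ← DxM_eq_md, ← DxM_eq_md]
      have hsch : DxM (DtM K) (t, x) = DtM (DxM K) (t, x) := by
        ext i j
        show deriv (fun y => DtM K (t, y) i j) x = deriv (fun s => DxM K (s, x) i j) t
        exact (schwarz (hK i j) (t, x)).symm
      rw [hsch, mul_neg]
    have := (hW.const_mul lam).deriv
    rw [hψdef]
    rw [this, hmd, Matrix.trace_add]
  -- the integral of deriv ψ over a period vanishes
  have hψper : ψ 1 = ψ 0 := by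
    have h01 : (1 : ℝ) = 0 + 1 := by norm_num
    have hKp : (K (t, (0:ℝ) + 1))⁻¹ = (K (t, 0))⁻¹ := by rw [hKper]
    have hKtp : DtM K (t, (0:ℝ) + 1) = DtM K (t, 0) := by
      ext i j
      show deriv (fun s => K (s, (0:ℝ) + 1) i j) t = deriv (fun s => K (s, 0) i j) t
      congr 1
      funext s
      rw [hKper]
    have h2 : ψ (0 + 1) = ψ 0 := by
      rw [hψdef]
      simp only [hKp, hKtp]
    norm_num at h2
    exact h2
  have hintB : ∫ x in (0:ℝ)..1, deriv ψ x = 0 := by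
    rw [intervalIntegral.integral_deriv_eq_sub
      (fun x _ => (hψsm.differentiable (by simp)) x)
      ((hψsm.continuous_deriv (by simp)).intervalIntegrable 0 1)]
    rw [hψper, sub_self]
  -- continuity facts
  have hFcont : Continuous (fun z : ℝ × ℝ => (M z * Λ).trace) :=
    ((hMsm.mulM (msmooth_const Λ)).traceC).continuous
  have hD1sm : ContDiff ℝ (⊤ : ℕ∞) (fun z : ℝ × ℝ => (DtM S z * V z).trace) :=
    (hStsm.mulM hVsm).traceC
  have hD2sm : ContDiff ℝ (⊤ : ℕ∞) (fun z : ℝ × ℝ =>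
      lam * ((DtM (DxM K) z * Λ * (K z)⁻¹).trace
        + (DtM K z * Λ * -((K z)⁻¹ * DxM K z * (K z)⁻¹)).trace)) := by
    apply ContDiff.const_smul lam
    apply ContDiff.add
    · exact ((hKxsm.dtM.mulM (msmooth_const Λ)).mulM hNsm).traceC
    · exact ((hKtsm.mulM (msmooth_const Λ)).mulM
        (((hNsm.mulM hKxsm).mulM hNsm).negM)).traceC
  have hDcont : Continuous (fun z : ℝ × ℝ => (DtM S z * V z).trace
      + lam * ((DtM (DxM K) z * Λ * (K z)⁻¹).trace
        + (DtM K z * Λ * -((K z)⁻¹ * DxM K z * (K z)⁻¹)).trace)) :=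
    (hD1sm.add hD2sm).continuous
  -- bound on the compact set
  obtain ⟨C, hC⟩ := ((isCompact_Icc (a := t - 1) (b := t + 1)).prod
    (isCompact_Icc (a := (0:ℝ)) (b := 1))).exists_bound_of_continuousOn
    hDcont.continuousOn
  -- differentiate under the integral sign
  have hMain := intervalIntegral.hasDerivAt_integral_of_dominated_loc_of_deriv_le
    (μ := volume) (a := 0) (b := 1) (x₀ := t) (s := Metric.ball t 1)
    (F := fun s x => (M (s, x) * Λ).trace)
    (F' := fun s x => (DtM S (s, x) * V (s, x)).trace
      + lam * ((DtM (DxM K) (s, x) * Λ * (K (s, x))⁻¹).trace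
        + (DtM K (s, x) * Λ * -((K (s, x))⁻¹ * DxM K (s, x) * (K (s, x))⁻¹)).trace))
    (bound := fun _ => C)
    (Metric.ball_mem_nhds t one_pos)
    (Filter.Eventually.of_forall fun s =>
      ((hFcont.comp (continuous_const.prodMk continuous_id)).aestronglyMeasurable))
    ((hFcont.comp (continuous_const.prodMk continuous_id)).intervalIntegrable 0 1)
    ((hDcont.comp (continuous_const.prodMk continuous_id)).aestronglyMeasurable)
    (Filter.Eventually.of_forall fun x hx s hs => by
      apply hC
      constructor
      · rw [Metric.mem_ball, Real.dist_eq] at hs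
        have := abs_lt.mp hs
        exact Set.mem_Icc.mpr ⟨by linarith [this.1], by linarith [this.2]⟩
      · rw [Set.uIoc_of_le (by norm_num : (0:ℝ) ≤ 1)] at hx
        exact Set.mem_Icc.mpr ⟨hx.1.le, hx.2⟩)
    (intervalIntegrable_const)
    (Filter.Eventually.of_forall fun x hx s hs => claimA (s, x))
  have hderiv := hMain.2.deriv
  rw [hderiv]
  -- split the integral
  have hint1 : IntervalIntegrable (fun x => (DtM S (t, x) * V (t, x)).trace) volume 0 1 :=
    ((hD1sm.continuous.comp (continuous_const.prodMk continuous_id)).intervalIntegrable 0 1)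
  have hint2 : IntervalIntegrable (fun x =>
      lam * ((DtM (DxM K) (t, x) * Λ * (K (t, x))⁻¹).trace
        + (DtM K (t, x) * Λ * -((K (t, x))⁻¹ * DxM K (t, x) * (K (t, x))⁻¹)).trace))
      volume 0 1 :=
    ((hD2sm.continuous.comp (continuous_const.prodMk continuous_id)).intervalIntegrable 0 1)
  rw [intervalIntegral.integral_add hint1 hint2]
  have : (∫ x in (0:ℝ)..1,
      lam * ((DtM (DxM K) (t, x) * Λ * (K (t, x))⁻¹).trace
        + (DtM K (t, x) * Λ * -((K (t, x))⁻¹ * DxM K (t, x) * (K (t, x))⁻¹)).trace)) = 0 := by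
    have heq : (∫ x in (0:ℝ)..1,
        lam * ((DtM (DxM K) (t, x) * Λ * (K (t, x))⁻¹).trace
          + (DtM K (t, x) * Λ * -((K (t, x))⁻¹ * DxM K (t, x) * (K (t, x))⁻¹)).trace))
        = ∫ x in (0:ℝ)..1, deriv ψ x := by
      apply intervalIntegral.integral_congr
      intro x _
      rw [claimB x]
    rw [heq, hintB]
  rw [this, add_zero]
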